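/- Let D ⊆ ℝⁿ be a bounded measurable set and let γ : ℝⁿ × ℝⁿ → ℝ be measurable, symmetric (γ(x,y) = γ(y,x)), nonnegative, and such that ∫_D γ(x,y)² dy ≤ γ₄² for a.e. x ∈ D, for some constant γ₄ > 0. For v ∈ L²(D) define (−Lv)(x) := 2∫_D (v(x) − v(y)) γ(x,y) dy. Then for all u, v ∈ L²(D), ∫_D ∫_D (u(x) − u(y))(v(x) − v(y)) γ(x,y) dy dx = ∫_D (−Lu)(x) · v(x) dx, all integrals being absolutely convergent. -/

import Mathlib

open MeasureTheory

open ENNReal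

section aux
variable {α : Type*} [MeasurableSpace α] {μ : Measure α} [IsFiniteMeasure μ]
  {κ : α → α → ℝ} {c : ℝ}

lemma aux_kernel_sq_int (hκm : Measurable fun p : α × α => κ p.1 p.2)
    (hκ : ∀ᵐ x ∂μ, ∫⁻ y, ENNReal.ofReal (κ x y ^ 2) ∂μ ≤ ENNReal.ofReal (c ^ 2)) :
    Integrable (fun p : α × α => κ p.1 p.2 ^ 2) (μ.prod μ) := by
  refine ⟨(hκm.pow_const 2).aestronglyMeasurable, ?_⟩
  rw [hasFiniteIntegral_iff_ofReal (Filter.Eventually.of_forall fun p => sq_nonneg _)]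
  rw [lintegral_prod (fun p : α × α => ENNReal.ofReal (κ p.1 p.2 ^ 2)) ((hκm.pow_const 2).ennreal_ofReal).aemeasurable]
  calc ∫⁻ x, ∫⁻ y, ENNReal.ofReal (κ x y ^ 2) ∂μ ∂μ
      ≤ ∫⁻ _, ENNReal.ofReal (c ^ 2) ∂μ := lintegral_mono_ae hκ
    _ < ⊤ := by
        rw [lintegral_const]
        exact ENNReal.mul_lt_top ofReal_lt_top (measure_lt_top μ _)

lemma aux_mul_kernel_sq_int {f : α → ℝ} (hf : Integrable f μ)
    (hκm : Measurable fun p : α × α => κ p.1 p.2)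
    (hκ : ∀ᵐ x ∂μ, ∫⁻ y, ENNReal.ofReal (κ x y ^ 2) ∂μ ≤ ENNReal.ofReal (c ^ 2)) :
    Integrable (fun p : α × α => f p.1 * κ p.1 p.2 ^ 2) (μ.prod μ) := by
  refine ⟨hf.1.comp_fst.mul (hκm.pow_const 2).aestronglyMeasurable, ?_⟩
  have hmeq : ∀ p : α × α, ((‖f p.1 * κ p.1 p.2 ^ 2‖₊ : ℝ≥0∞))
      = (‖f p.1‖₊ : ℝ≥0∞) * ENNReal.ofReal (κ p.1 p.2 ^ 2) := by
    intro p
    rw [nnnorm_mul, ENNReal.coe_mul, ← enorm_eq_nnnorm (κ p.1 p.2 ^ 2), Real.enorm_eq_ofReal (sq_nonneg _)]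
  have hm : AEMeasurable
      (fun p : α × α => (‖f p.1‖₊ : ℝ≥0∞) * ENNReal.ofReal (κ p.1 p.2 ^ 2)) (μ.prod μ) :=
    (hf.1.comp_fst.enorm).mul
      (((hκm.pow_const 2).ennreal_ofReal).aemeasurable)
  rw [HasFiniteIntegral]
  simp only [enorm_eq_nnnorm, hmeq]
  rw [lintegral_prod (fun p : α × α => (‖f p.1‖₊ : ℝ≥0∞) * ENNReal.ofReal (κ p.1 p.2 ^ 2)) hm]
  calc ∫⁻ x, ∫⁻ y, (‖f x‖₊ : ℝ≥0∞) * ENNReal.ofReal (κ x y ^ 2) ∂μ ∂μ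
      = ∫⁻ x, (‖f x‖₊ : ℝ≥0∞) * ∫⁻ y, ENNReal.ofReal (κ x y ^ 2) ∂μ ∂μ := by
        refine lintegral_congr fun x => ?_
        rw [lintegral_const_mul' _ _ ENNReal.coe_ne_top]
    _ ≤ ∫⁻ x, (‖f x‖₊ : ℝ≥0∞) * ENNReal.ofReal (c ^ 2) ∂μ := by
        refine lintegral_mono_ae (hκ.mono fun x hx => ?_)
        exact mul_le_mul_right hx _
    _ = (∫⁻ x, (‖f x‖₊ : ℝ≥0∞) ∂μ) * ENNReal.ofReal (c ^ 2) := by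
        rw [lintegral_mul_const' _ _ ofReal_ne_top]
    _ < ⊤ := ENNReal.mul_lt_top hf.2 ofReal_lt_top

lemma aux_f_mul_kernel {f : α → ℝ} (hf : Integrable f μ)
    (hκm : Measurable fun p : α × α => κ p.1 p.2) (hκnn : ∀ x y, 0 ≤ κ x y)
    (hκ : ∀ᵐ x ∂μ, ∫⁻ y, ENNReal.ofReal (κ x y ^ 2) ∂μ ≤ ENNReal.ofReal (c ^ 2)) :
    Integrable (fun p : α × α => f p.1 * κ p.1 p.2) (μ.prod μ) := by
  have h1 : Integrable (fun p : α × α => |f p.1| * 1) (μ.prod μ) :=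
    hf.abs.mul_prod (integrable_const (1 : ℝ))
  have h2 : Integrable (fun p : α × α => |f p.1| * κ p.1 p.2 ^ 2) (μ.prod μ) :=
    aux_mul_kernel_sq_int hf.abs hκm hκ
  refine Integrable.mono' (((h1.add h2).div_const 2))
    (hf.1.comp_fst.mul hκm.aestronglyMeasurable)
    (Filter.Eventually.of_forall fun p => ?_)
  have hnn := hκnn p.1 p.2
  have habs : ‖f p.1 * κ p.1 p.2‖ = |f p.1| * κ p.1 p.2 := by
    rw [Real.norm_eq_abs, abs_mul, abs_of_nonneg hnn]
  rw [habs]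
  simp only [Pi.add_apply]
  have h0 : 0 ≤ |f p.1| := abs_nonneg _
  nlinarith [mul_nonneg h0 (sq_nonneg (κ p.1 p.2 - 1))]

lemma aux_fg_mul_kernel {f g : α → ℝ} (hf : MemLp f 2 μ) (hg : MemLp g 2 μ)
    (hκm : Measurable fun p : α × α => κ p.1 p.2) (hκnn : ∀ x y, 0 ≤ κ x y)
    (hκ : ∀ᵐ x ∂μ, ∫⁻ y, ENNReal.ofReal (κ x y ^ 2) ∂μ ≤ ENNReal.ofReal (c ^ 2)) :
    Integrable (fun p : α × α => f p.1 * g p.2 * κ p.1 p.2) (μ.prod μ) := by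
  have h1 : Integrable (fun p : α × α => f p.1 ^ 2 * g p.2 ^ 2) (μ.prod μ) :=
    hf.integrable_sq.mul_prod hg.integrable_sq
  have h2 := aux_kernel_sq_int hκm hκ
  refine Integrable.mono' ((h1.add h2).div_const 2)
    ((hf.1.comp_fst.mul hg.1.comp_snd).mul hκm.aestronglyMeasurable)
    (Filter.Eventually.of_forall fun p => ?_)
  have hnn := hκnn p.1 p.2
  have habs : ‖f p.1 * g p.2 * κ p.1 p.2‖ = |f p.1 * g p.2| * κ p.1 p.2 := by
    rw [Real.norm_eq_abs, abs_mul, abs_of_nonneg hnn]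
  rw [habs]
  simp only [Pi.add_apply]
  have h0 : 0 ≤ |f p.1 * g p.2| := abs_nonneg _
  have hsq : |f p.1 * g p.2| ^ 2 = f p.1 ^ 2 * g p.2 ^ 2 := by
    rw [sq_abs, mul_pow]
  nlinarith [sq_nonneg (|f p.1 * g p.2| - κ p.1 p.2)]

end aux

/-- The nonlocal Green's first identity for square-integrable kernels (Case 2): with
`(-Lv)(x) = 2∫_D (v(x) - v(y)) γ(x,y) dy`, one has
`∫_D∫_D (u(x)-u(y))(v(x)-v(y)) γ(x,y) dy dx = ∫_D (-Lu)(x) v(x) dx`,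
all integrals being absolutely convergent. -/
theorem nonlocal_green_identity
    (n : ℕ) (D : Set (EuclideanSpace ℝ (Fin n))) (hD : MeasurableSet D)
    (hDbdd : Bornology.IsBounded D)
    (γ : EuclideanSpace ℝ (Fin n) → EuclideanSpace ℝ (Fin n) → ℝ)
    (hγmeas : Measurable
      fun p : EuclideanSpace ℝ (Fin n) × EuclideanSpace ℝ (Fin n) => γ p.1 p.2)
    (hγsymm : ∀ x y, γ x y = γ y x) (hγnn : ∀ x y, 0 ≤ γ x y)
    (γ₄ : ℝ) (hγ₄ : 0 < γ₄)
    (hγL2 : ∀ᵐ x ∂(volume.restrict D),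
      ∫⁻ y in D, ENNReal.ofReal ((γ x y) ^ 2) ≤ ENNReal.ofReal (γ₄ ^ 2))
    (u v : EuclideanSpace ℝ (Fin n) → ℝ)
    (hu : MemLp u 2 (volume.restrict D)) (hv : MemLp v 2 (volume.restrict D)) :
    IntegrableOn
      (fun p : EuclideanSpace ℝ (Fin n) × EuclideanSpace ℝ (Fin n) =>
        (u p.1 - u p.2) * (v p.1 - v p.2) * γ p.1 p.2) (D ×ˢ D) (volume.prod volume) ∧
    (∀ᵐ x ∂(volume.restrict D), IntegrableOn (fun y => (u x - u y) * γ x y) D volume) ∧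
    IntegrableOn (fun x => (2 * ∫ y in D, (u x - u y) * γ x y) * v x) D volume ∧
    (∫ x in D, ∫ y in D, (u x - u y) * (v x - v y) * γ x y)
      = ∫ x in D, (2 * ∫ y in D, (u x - u y) * γ x y) * v x := by
  set μ := volume.restrict D with hμdef
  haveI hμfin : IsFiniteMeasure μ := by
    constructor
    rw [hμdef, Measure.restrict_apply_univ]
    exact hDbdd.measure_lt_top
  have hκ : ∀ᵐ x ∂μ, ∫⁻ y, ENNReal.ofReal (γ x y ^ 2) ∂μ ≤ ENNReal.ofReal (γ₄ ^ 2) := hγL2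
  -- basic integrability facts
  have huint : Integrable u μ := hu.integrable one_le_two
  have hvint : Integrable v μ := hv.integrable one_le_two
  have huv : Integrable (fun x => u x * v x) μ := by
    refine Integrable.mono' ((hu.integrable_sq.add hv.integrable_sq).div_const 2)
      (hu.1.mul hv.1) (Filter.Eventually.of_forall fun x => ?_)
    simp only [Real.norm_eq_abs, Pi.add_apply]
    nlinarith [sq_nonneg (|u x| - |v x|), sq_abs (u x), sq_abs (v x), abs_mul (u x) (v x),
      abs_nonneg (u x * v x)]
  -- integrability of the main pieces on the product
  have hG : Integrable
      (fun p : EuclideanSpace ℝ (Fin n) × EuclideanSpace ℝ (Fin n) =>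
        (u p.1 - u p.2) * γ p.1 p.2 * v p.1) (μ.prod μ) := by
    have hA := aux_f_mul_kernel huv hγmeas hγnn hκ
    have hB := aux_fg_mul_kernel hv hu hγmeas hγnn hκ
    have heq : (fun p : EuclideanSpace ℝ (Fin n) × EuclideanSpace ℝ (Fin n) =>
        (u p.1 - u p.2) * γ p.1 p.2 * v p.1)
        = fun p => (u p.1 * v p.1) * γ p.1 p.2 - (v p.1 * u p.2) * γ p.1 p.2 := by
      funext p; ring
    rw [heq]
    exact hA.sub hB
  have hH : Integrable
      (fun p : EuclideanSpace ℝ (Fin n) × EuclideanSpace ℝ (Fin n) =>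
        (u p.1 - u p.2) * γ p.1 p.2 * v p.2) (μ.prod μ) := by
    have hC := aux_fg_mul_kernel hu hv hγmeas hγnn hκ
    have hE : Integrable
        (fun p : EuclideanSpace ℝ (Fin n) × EuclideanSpace ℝ (Fin n) =>
          (u p.2 * v p.2) * γ p.1 p.2) (μ.prod μ) := by
      refine ((aux_f_mul_kernel huv hγmeas hγnn hκ).swap).congr
        (Filter.Eventually.of_forall fun z => ?_)
      simp only [Function.comp_apply, Prod.fst_swap, Prod.snd_swap]
      rw [hγsymm]
    have heq : (fun p : EuclideanSpace ℝ (Fin n) × EuclideanSpace ℝ (Fin n) =>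
        (u p.1 - u p.2) * γ p.1 p.2 * v p.2)
        = fun p => (u p.1 * v p.2) * γ p.1 p.2 - (u p.2 * v p.2) * γ p.1 p.2 := by
      funext p; ring
    rw [heq]
    exact hC.sub hE
  have hF : Integrable
      (fun p : EuclideanSpace ℝ (Fin n) × EuclideanSpace ℝ (Fin n) =>
        (u p.1 - u p.2) * (v p.1 - v p.2) * γ p.1 p.2) (μ.prod μ) := by
    have heq : (fun p : EuclideanSpace ℝ (Fin n) × EuclideanSpace ℝ (Fin n) =>
        (u p.1 - u p.2) * (v p.1 - v p.2) * γ p.1 p.2)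
        = fun p => (u p.1 - u p.2) * γ p.1 p.2 * v p.1
            - (u p.1 - u p.2) * γ p.1 p.2 * v p.2 := by
      funext p; ring
    rw [heq]
    exact hG.sub hH
  -- Part 1
  have part1 : IntegrableOn
      (fun p : EuclideanSpace ℝ (Fin n) × EuclideanSpace ℝ (Fin n) =>
        (u p.1 - u p.2) * (v p.1 - v p.2) * γ p.1 p.2) (D ×ˢ D) (volume.prod volume) := by
    rw [IntegrableOn, ← Measure.prod_restrict]
    exact hF
  -- Part 2
  have part2 : ∀ᵐ x ∂μ, Integrable (fun y => (u x - u y) * γ x y) μ := by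
    filter_upwards [hκ] with x hx
    have hslice : Measurable (fun y => γ x y) :=
      hγmeas.comp measurable_prodMk_left
    have hγx2 : Integrable (fun y => γ x y ^ 2) μ := by
      refine ⟨(hslice.pow_const 2).aestronglyMeasurable, ?_⟩
      rw [hasFiniteIntegral_iff_ofReal (Filter.Eventually.of_forall fun y => sq_nonneg _)]
      exact lt_of_le_of_lt hx ofReal_lt_top
    have hux2 : Integrable (fun y => (u x - u y) ^ 2) μ :=
      ((memLp_const (u x)).sub hu).integrable_sq
    refine Integrable.mono' ((hux2.add hγx2).div_const 2)
      ((aestronglyMeasurable_const.sub hu.1).mul hslice.aestronglyMeasurable)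
      (Filter.Eventually.of_forall fun y => ?_)
    simp only [Pi.add_apply, Real.norm_eq_abs]
    have hnn := hγnn x y
    rw [abs_mul, abs_of_nonneg hnn]
    nlinarith [sq_nonneg (|u x - u y| - γ x y), sq_abs (u x - u y), abs_nonneg (u x - u y)]
  -- Part 3
  have hGfub : Integrable (fun x => (∫ y, (u x - u y) * γ x y ∂μ) * v x) μ := by
    have := hG.integral_prod_left
    have heq : (fun x => ∫ y, (u x - u y) * γ x y * v x ∂μ)
        = fun x => (∫ y, (u x - u y) * γ x y ∂μ) * v x := by
      funext x
      exact integral_mul_const (v x) _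
    rwa [heq] at this
  have part3 : Integrable (fun x => (2 * ∫ y, (u x - u y) * γ x y ∂μ) * v x) μ := by
    have := hGfub.const_mul 2
    have heq : (fun x => 2 * ((∫ y, (u x - u y) * γ x y ∂μ) * v x))
        = fun x => (2 * ∫ y, (u x - u y) * γ x y ∂μ) * v x := by
      funext x; ring
    rwa [heq] at this
  refine ⟨part1, part2, part3, ?_⟩
  -- Part 4: the identity
  have hLHS : (∫ x, ∫ y, (u x - u y) * (v x - v y) * γ x y ∂μ ∂μ)
      = ∫ z : EuclideanSpace ℝ (Fin n) × EuclideanSpace ℝ (Fin n),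
          (u z.1 - u z.2) * (v z.1 - v z.2) * γ z.1 z.2 ∂(μ.prod μ) :=
    (integral_prod _ hF).symm
  have hsplit : (∫ z : EuclideanSpace ℝ (Fin n) × EuclideanSpace ℝ (Fin n),
        (u z.1 - u z.2) * (v z.1 - v z.2) * γ z.1 z.2 ∂(μ.prod μ))
      = (∫ z : EuclideanSpace ℝ (Fin n) × EuclideanSpace ℝ (Fin n),
          (u z.1 - u z.2) * γ z.1 z.2 * v z.1 ∂(μ.prod μ))
        - ∫ z : EuclideanSpace ℝ (Fin n) × EuclideanSpace ℝ (Fin n),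
          (u z.1 - u z.2) * γ z.1 z.2 * v z.2 ∂(μ.prod μ) := by
    rw [← integral_sub hG hH]
    refine integral_congr_ae (Filter.Eventually.of_forall fun z => ?_)
    ring
  have hswap : (∫ z : EuclideanSpace ℝ (Fin n) × EuclideanSpace ℝ (Fin n),
        (u z.1 - u z.2) * γ z.1 z.2 * v z.2 ∂(μ.prod μ))
      = - ∫ z : EuclideanSpace ℝ (Fin n) × EuclideanSpace ℝ (Fin n),
          (u z.1 - u z.2) * γ z.1 z.2 * v z.1 ∂(μ.prod μ) := by
    have h1 := integral_prod_swap (μ := μ) (ν := μ)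
      (fun z : EuclideanSpace ℝ (Fin n) × EuclideanSpace ℝ (Fin n) =>
        (u z.1 - u z.2) * γ z.1 z.2 * v z.2)
    rw [← h1]
    have heq : (fun z : EuclideanSpace ℝ (Fin n) × EuclideanSpace ℝ (Fin n) =>
        (u z.swap.1 - u z.swap.2) * γ z.swap.1 z.swap.2 * v z.swap.2)
        = fun z => -((u z.1 - u z.2) * γ z.1 z.2 * v z.1) := by
      funext z
      simp only [Prod.fst_swap, Prod.snd_swap]
      rw [hγsymm]
      ring
    calc (∫ z : EuclideanSpace ℝ (Fin n) × EuclideanSpace ℝ (Fin n),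
          (u z.swap.1 - u z.swap.2) * γ z.swap.1 z.swap.2 * v z.swap.2 ∂(μ.prod μ))
        = ∫ z : EuclideanSpace ℝ (Fin n) × EuclideanSpace ℝ (Fin n),
            -((u z.1 - u z.2) * γ z.1 z.2 * v z.1) ∂(μ.prod μ) := by rw [heq]
      _ = - ∫ z : EuclideanSpace ℝ (Fin n) × EuclideanSpace ℝ (Fin n),
            (u z.1 - u z.2) * γ z.1 z.2 * v z.1 ∂(μ.prod μ) := integral_neg _
  have hGval : (∫ z : EuclideanSpace ℝ (Fin n) × EuclideanSpace ℝ (Fin n),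
        (u z.1 - u z.2) * γ z.1 z.2 * v z.1 ∂(μ.prod μ))
      = ∫ x, (∫ y, (u x - u y) * γ x y ∂μ) * v x ∂μ := by
    rw [integral_prod _ hG]
    refine integral_congr_ae (Filter.Eventually.of_forall fun x => ?_)
    exact integral_mul_const (v x) _
  have hRHS : (∫ x, (2 * ∫ y, (u x - u y) * γ x y ∂μ) * v x ∂μ)
      = 2 * ∫ x, (∫ y, (u x - u y) * γ x y ∂μ) * v x ∂μ := by
    rw [← integral_const_mul]
    refine integral_congr_ae (Filter.Eventually.of_forall fun x => ?_)
    ring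
  rw [hLHS, hsplit, hswap, hGval, hRHS]
  ring
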